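/- (Symmetrization over cyclic and reflected shifts produces a bordered symmetric circulant matrix.) Let T ≥ 1 and let A be a symmetric positive semidefinite (T+1)×(T+1) real matrix. For each k ∈ Fin T and each d ∈ {+1, −1}, let π_{k,d} be the permutation of {0,1,…,T} that fixes the index T and maps each i < T to (d·i + k) mod T, and let A^{(k,d)} be the matrix with entries (A^{(k,d)})_{i,j} = A_{π_{k,d}(i), π_{k,d}(j)}. Then the average A' = (1/(2T)) · ∑_{k ∈ Fin T} ∑_{d ∈ {±1}} A^{(k,d)} is positive semidefinite and has the form A' = [[circ(m), m_T·1],[m_T·1ᵀ, m_{T+1}]] for some m : Fin T → ℝ with m_t = m_{(T−t) mod T} for all t and some m_T, m_{T+1} ∈ ℝ. -/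

import Mathlib

set_option maxHeartbeats 1000000


/-- The permutation `π_{k,d}` of `Fin T ⊕ Unit` fixing the border index and mapping
`i ↦ (d·i + k) mod T` on `Fin T`, where `d = +1` (`Bool` value `true`) or `d = -1`
(`Bool` value `false`). -/
def shiftPerm (T : ℕ) (k : Fin T) (d : Bool) : (Fin T ⊕ Unit) → (Fin T ⊕ Unit) :=
  fun x =>
    match x with
    | Sum.inl i => Sum.inl (if d then i + k else k - i)
    | Sum.inr u => Sum.inr u

/-- Symmetrization over cyclic and reflected shifts produces a bordered symmetric
circulant matrix: if `A` is a symmetric positive semidefinite `(T+1)×(T+1)` matrix,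
then the average `A' = (1/(2T)) ∑_{k,d} A^{(k,d)}` of its conjugates under the
permutations `π_{k,d}` is positive semidefinite and has the bordered circulant form
`[[circ m, mT·1], [mT·1ᵀ, mT1]]` with `m t = m (-t)`. -/
theorem symmetrization_bordered_circulant (T : ℕ) (hT : 1 ≤ T)
    (A : Matrix (Fin T ⊕ Unit) (Fin T ⊕ Unit) ℝ) (hA : A.PosSemidef) :
    ((1 / (2 * (T : ℝ))) •
        ∑ k : Fin T, ∑ d : Bool,
          (Matrix.of fun i j => A (shiftPerm T k d i) (shiftPerm T k d j) :
            Matrix (Fin T ⊕ Unit) (Fin T ⊕ Unit) ℝ)).PosSemidef ∧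
    ∃ (m : Fin T → ℝ) (mT mT1 : ℝ), (∀ t : Fin T, m t = m (-t)) ∧
      (1 / (2 * (T : ℝ))) •
          ∑ k : Fin T, ∑ d : Bool,
            (Matrix.of fun i j => A (shiftPerm T k d i) (shiftPerm T k d j) :
              Matrix (Fin T ⊕ Unit) (Fin T ⊕ Unit) ℝ) =
        Matrix.fromBlocks
          (Matrix.of fun i j : Fin T => m (j - i))
          (Matrix.of fun (_ : Fin T) (_ : Unit) => mT)
          (Matrix.of fun (_ : Unit) (_ : Fin T) => mT)
          (Matrix.of fun (_ : Unit) (_ : Unit) => mT1) := by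
  haveI : NeZero T := ⟨by omega⟩
  -- abbreviations
  set c : ℝ := 1 / (2 * (T : ℝ)) with hc
  have hc0 : 0 ≤ c := by positivity
  have hsym : ∀ x y, A x y = A y x := fun x y => by
    have := congrFun (congrFun hA.1 x) y
    simpa using this.symm
  -- each conjugate is PSD
  have hterm : ∀ (k : Fin T) (d : Bool),
      (Matrix.of fun i j => A (shiftPerm T k d i) (shiftPerm T k d j) :
        Matrix (Fin T ⊕ Unit) (Fin T ⊕ Unit) ℝ).PosSemidef :=
    fun k d => hA.submatrix (shiftPerm T k d)
  have hsumPSD : (∑ k : Fin T, ∑ d : Bool,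
      (Matrix.of fun i j => A (shiftPerm T k d i) (shiftPerm T k d j) :
        Matrix (Fin T ⊕ Unit) (Fin T ⊕ Unit) ℝ)).PosSemidef := by
    apply Finset.sum_induction _ _ (fun a b ha hb => ha.add hb) Matrix.PosSemidef.zero
    intro k _
    apply Finset.sum_induction _ _ (fun a b ha hb => ha.add hb) Matrix.PosSemidef.zero
    intro d _
    exact hterm k d
  have hPSD : (c • ∑ k : Fin T, ∑ d : Bool,
      (Matrix.of fun i j => A (shiftPerm T k d i) (shiftPerm T k d j) :
        Matrix (Fin T ⊕ Unit) (Fin T ⊕ Unit) ℝ)).PosSemidef := by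
    refine ⟨?_, ?_⟩
    · have h1 := hsumPSD.1
      unfold Matrix.IsHermitian at h1 ⊢
      rw [Matrix.conjTranspose_smul, h1, star_trivial]
    · intro x
      exact (hsumPSD.smul hc0).2 x
  refine ⟨hPSD, ?_⟩
  -- entry computation
  refine ⟨fun t => c * ∑ k : Fin T,
      (A (Sum.inl k) (Sum.inl (k + t)) + A (Sum.inl k) (Sum.inl (k - t))),
    c * ∑ _k : Fin T, (2 * A (Sum.inl _k) (Sum.inr ())),
    c * ∑ _k : Fin T, (2 * A (Sum.inr ()) (Sum.inr ())), ?_, ?_⟩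
  · intro t
    show c * ∑ k : Fin T, (A (Sum.inl k) (Sum.inl (k + t)) + A (Sum.inl k) (Sum.inl (k - t)))
        = c * ∑ k : Fin T, (A (Sum.inl k) (Sum.inl (k + -t)) + A (Sum.inl k) (Sum.inl (k - -t)))
    congr 1
    refine Finset.sum_congr rfl fun k _ => ?_
    rw [sub_neg_eq_add, ← sub_eq_add_neg, add_comm]
  · ext i j
    have happ : ∀ i j, ((∑ k : Fin T, ∑ d : Bool,
        (Matrix.of fun i j => A (shiftPerm T k d i) (shiftPerm T k d j) :
          Matrix (Fin T ⊕ Unit) (Fin T ⊕ Unit) ℝ)) i j)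
        = ∑ k : Fin T, (A (shiftPerm T k false i) (shiftPerm T k false j)
            + A (shiftPerm T k true i) (shiftPerm T k true j)) := by
      intro i j
      rw [Matrix.sum_apply]
      refine Finset.sum_congr rfl fun k _ => ?_
      rw [Matrix.sum_apply]
      simp [Fintype.sum_bool, add_comm]
    rcases i with i | u <;> rcases j with j | v
    · simp only [Matrix.smul_apply, Matrix.fromBlocks_apply₁₁, Matrix.of_apply, happ,
        smul_eq_mul]
      congr 1
      simp only [shiftPerm]
      rw [Finset.sum_add_distrib, Finset.sum_add_distrib, add_comm]
      congr 1
      · -- shift part: ∑ A (i + k) (j + k) = ∑ A k (k + (j - i))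
        refine Fintype.sum_equiv (Equiv.addLeft i) _ _ (fun k => ?_)
        have h : i + k + (j - i) = j + k := by abel
        simp [Equiv.coe_addLeft, h]
      · -- reflected part: ∑ A (k - i) (k - j) = ∑ A k (k - (j - i))
        refine Fintype.sum_equiv (Equiv.subRight i) _ _ (fun k => ?_)
        have h : k - i - (j - i) = k - j := by abel
        simp [Equiv.subRight_apply, h]
    · simp only [Matrix.smul_apply, Matrix.fromBlocks_apply₁₂, Matrix.of_apply, happ,
        smul_eq_mul]
      congr 1
      simp only [shiftPerm, Bool.false_eq_true, if_false, if_true]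
      rw [Finset.sum_add_distrib]
      have h1 : ∑ k : Fin T, A (Sum.inl (k - i)) (Sum.inr v)
          = ∑ k : Fin T, A (Sum.inl k) (Sum.inr ()) := by
        refine Fintype.sum_equiv (Equiv.subRight i) _ _ (fun k => ?_)
        simp [Equiv.subRight_apply]
      have h2 : ∑ k : Fin T, A (Sum.inl (i + k)) (Sum.inr v)
          = ∑ k : Fin T, A (Sum.inl k) (Sum.inr ()) := by
        refine Fintype.sum_equiv (Equiv.addLeft i) _ _ (fun k => ?_)
        simp [Equiv.coe_addLeft]
      rw [h1, h2, ← Finset.sum_add_distrib]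
      refine Finset.sum_congr rfl fun k _ => ?_
      ring
    · simp only [Matrix.smul_apply, Matrix.fromBlocks_apply₂₁, Matrix.of_apply, happ,
        smul_eq_mul]
      congr 1
      simp only [shiftPerm, Bool.false_eq_true, if_false, if_true]
      rw [Finset.sum_add_distrib]
      have h1 : ∑ k : Fin T, A (Sum.inr u) (Sum.inl (k - j))
          = ∑ k : Fin T, A (Sum.inl k) (Sum.inr ()) := by
        refine Fintype.sum_equiv (Equiv.subRight j) _ _ (fun k => ?_)
        simp [Equiv.subRight_apply, hsym]
      have h2 : ∑ k : Fin T, A (Sum.inr u) (Sum.inl (j + k))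
          = ∑ k : Fin T, A (Sum.inl k) (Sum.inr ()) := by
        refine Fintype.sum_equiv (Equiv.addLeft j) _ _ (fun k => ?_)
        simp [Equiv.coe_addLeft, hsym]
      rw [h1, h2, ← Finset.sum_add_distrib]
      refine Finset.sum_congr rfl fun k _ => ?_
      ring
    · simp only [Matrix.smul_apply, Matrix.fromBlocks_apply₂₂, Matrix.of_apply, happ,
        smul_eq_mul]
      congr 1
      simp only [shiftPerm]
      refine Finset.sum_congr rfl fun k _ => ?_
      ring
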